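/- For nonnegative integers n, k with n ≤ 2^k, D(2^(k+1) − n − 1) = 2^k − 2n + D(2^k + n − 1). -/

import Mathlib

/-- f m = (#1 digits) - (#0 digits) in the binary expansion of m. -/
def f (m : ℕ) : ℤ :=
  2 * ((Nat.digits 2 m).count 1 : ℤ) - ((Nat.digits 2 m).length : ℤ)

/-- Cumulated deficient binary digit sum (OEIS A268289), D 0 = 0. -/
def D (n : ℕ) : ℤ := ∑ m ∈ Finset.Icc 1 n, f m

lemma D_succ (m : ℕ) : D (m + 1) = D m + f (m + 1) := by
  unfold D
  rw [Finset.sum_Icc_succ_top (by omega)]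

lemma f_one : f 1 = 1 := by
  simp [f]

lemma f_two_mul (m : ℕ) (hm : 0 < m) : f (2 * m) = f m - 1 := by
  have hd : Nat.digits 2 (2 * m) = 0 :: Nat.digits 2 m := by
    rw [Nat.digits_def' (by norm_num : 1 < 2) (by omega)]
    congr 1
    · omega
    · congr 1; omega
  rw [f, f, hd]
  simp [List.count_cons]
  push_cast
  ring

lemma f_two_mul_add_one (m : ℕ) (hm : 0 < m) : f (2 * m + 1) = f m + 1 := by
  have hd : Nat.digits 2 (2 * m + 1) = 1 :: Nat.digits 2 m := by
    rw [Nat.digits_def' (by norm_num : 1 < 2) (by omega)]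
    congr 1
    · omega
    · congr 1; omega
  rw [f, f, hd]
  simp [List.count_cons]
  push_cast
  ring

lemma key : ∀ k i j : ℕ, i + j + 1 = 2 ^ k → f (2 ^ k + i) + f (2 ^ k + j) = 2 := by
  intro k
  induction k with
  | zero =>
    intro i j hij
    have hi : i = 0 := by omega
    have hj : j = 0 := by omega
    subst hi; subst hj
    simp [f_one]
  | succ k ih =>
    intro i j hij
    have hp : 2 ^ (k + 1) = 2 * 2 ^ k := by ring
    rcases Nat.even_or_odd i with ⟨a, ha⟩ | ⟨a, ha⟩
    · -- i = 2a, j odd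
      obtain ⟨b, hb⟩ : ∃ b, j = 2 * b + 1 := ⟨j / 2, by omega⟩
      have hab : a + b + 1 = 2 ^ k := by omega
      have h1 : 2 ^ (k + 1) + i = 2 * (2 ^ k + a) := by omega
      have h2 : 2 ^ (k + 1) + j = 2 * (2 ^ k + b) + 1 := by omega
      rw [h1, h2, f_two_mul _ (by positivity), f_two_mul_add_one _ (by positivity)]
      have := ih a b hab
      linarith
    · -- i = 2a+1, j even
      obtain ⟨b, hb⟩ : ∃ b, j = 2 * b := ⟨j / 2, by omega⟩
      have hab : a + b + 1 = 2 ^ k := by omega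
      have h1 : 2 ^ (k + 1) + i = 2 * (2 ^ k + a) + 1 := by omega
      have h2 : 2 ^ (k + 1) + j = 2 * (2 ^ k + b) := by omega
      rw [h1, h2, f_two_mul _ (by positivity), f_two_mul_add_one _ (by positivity)]
      have := ih a b hab
      linarith

def S (k n : ℕ) : Prop :=
  D (2 ^ (k + 1) - n - 1) = 2 ^ k - 2 * n + D (2 ^ k + n - 1)

lemma step (k n : ℕ) (h : n < 2 ^ k) : S k n ↔ S k (n + 1) := by
  obtain ⟨j, hj⟩ : ∃ j, 2 ^ k = n + j + 1 := ⟨2 ^ k - n - 1, by omega⟩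
  have hp : 2 ^ (k + 1) = 2 * 2 ^ k := by ring
  unfold S
  have h1 : 2 ^ (k + 1) - n - 1 = (2 ^ k + j - 1) + 1 := by omega
  have h2 : 2 ^ (k + 1) - (n + 1) - 1 = 2 ^ k + j - 1 := by omega
  have h3 : 2 ^ k + (n + 1) - 1 = (2 ^ k + n - 1) + 1 := by omega
  have h4 : (2 ^ k + n - 1) + 1 = 2 ^ k + n := by omega
  have h5 : (2 ^ k + j - 1) + 1 = 2 ^ k + j := by omega
  have hk := key k n j (by omega)
  rw [h1, h2, h3, D_succ, D_succ, h4, h5]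
  push_cast
  constructor <;> intro h' <;> linarith

lemma up (k : ℕ) : ∀ d, d ≤ 2 ^ k → S (k + 1) (2 ^ k + d) := by
  intro d
  induction d with
  | zero =>
    intro _
    unfold S
    have h1 : 2 ^ (k + 1 + 1) - (2 ^ k + 0) - 1 = 2 ^ (k + 1) + (2 ^ k + 0) - 1 := by
      have : 2 ^ (k + 1 + 1) = 2 * (2 * 2 ^ k) := by ring
      have h2 : 2 ^ (k + 1) = 2 * 2 ^ k := by ring
      omega
    rw [h1]
    have h3 : ((2 : ℤ) ^ (k + 1) - 2 * ((2 ^ k + 0 : ℕ) : ℤ)) = 0 := by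
      push_cast
      ring
    linarith [h3]
  | succ d ih =>
    intro hd
    have h1 : 2 ^ k + d < 2 ^ (k + 1) := by
      have : 2 ^ (k + 1) = 2 * 2 ^ k := by ring
      omega
    have := (step (k + 1) (2 ^ k + d) h1).mp (ih (by omega))
    have he : 2 ^ k + (d + 1) = (2 ^ k + d) + 1 := rfl
    rw [he]
    exact this

lemma down (k : ℕ) : ∀ d, d ≤ 2 ^ k → S (k + 1) (2 ^ k - d) := by
  intro d
  induction d with
  | zero =>
    intro _
    have := up k 0 (by positivity)
    simpa using this
  | succ d ih =>
    intro hd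
    have h1 : 2 ^ k - (d + 1) < 2 ^ (k + 1) := by
      have : 2 ^ (k + 1) = 2 * 2 ^ k := by ring
      omega
    have h2 : (2 ^ k - (d + 1)) + 1 = 2 ^ k - d := by omega
    have := (step (k + 1) (2 ^ k - (d + 1)) h1).mpr (h2 ▸ ih (by omega))
    exact this

theorem stmt_13 (n k : ℕ) (h : n ≤ 2 ^ k) :
    D (2 ^ (k + 1) - n - 1) = 2 ^ k - 2 * n + D (2 ^ k + n - 1) := by
  have hD0 : D 0 = 0 := by simp [D]
  have hD1 : D 1 = 1 := by
    have := D_succ 0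
    rw [hD0, f_one] at this
    simpa using this
  match k with
  | 0 =>
    interval_cases n
    · show D 1 = 2 ^ 0 - 2 * (0:ℕ) + D 0
      rw [hD0, hD1]; norm_num
    · show D 0 = 2 ^ 0 - 2 * (1:ℕ) + D 1
      rw [hD0, hD1]; norm_num
  | k + 1 =>
    rcases le_or_gt n (2 ^ k) with hn | hn
    · have := down k (2 ^ k - n) (by omega)
      have he : 2 ^ k - (2 ^ k - n) = n := by omega
      rw [he] at this
      exact this
    · have h2 : 2 ^ (k + 1) = 2 * 2 ^ k := by ring
      have := up k (n - 2 ^ k) (by omega)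
      have he : 2 ^ k + (n - 2 ^ k) = n := by omega
      rw [he] at this
      exact this
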